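/- arXiv:2212.07365 — 2 statements merged into one kernel-verified Lean document; each statement's English description precedes it below -/
import Mathlib

section
/- Let m be a positive integer, let y, μ_l, μ_k ∈ ℝ^m, and let α_l, α_k ∈ (0,∞)^m be fixed strictly positive base steepness vectors. Assume that y_i ≠ μ_{li} and y_i ≠ μ_{ki} for every i = 1, …, m, and that there exists at least one index i with μ_{ki} < μ_{li} (so that H(y; (μ_l, tα_l), (μ_k, tα_k)) = 0). Then the product Λ(y; μ_l, tα_l)·P(y; μ_k, tα_k) converges to 0 exponentially as the steepness goes to infinity: there exist constants C, c > 0 such that Λ(y; μ_l, tα_l)·P(y; μ_k, tα_k) ≤ C·exp(−c·t) for all t ≥ 1. -/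
open MeasureTheory ProbabilityTheory Real

noncomputable def logisticFun (y μ α : ℝ) : ℝ := 1 / (1 + Real.exp (-α * (y - μ)))

noncomputable def rbfFun (y μ α : ℝ) : ℝ :=
  Real.exp (-α * (y - μ)) / (1 + Real.exp (-α * (y - μ))) ^ 2

noncomputable def conjLog {m : ℕ} (y μ α : Fin m → ℝ) : ℝ :=
  ∏ i, logisticFun (y i) (μ i) (α i)

noncomputable def conjRBF {m : ℕ} (y μ α : Fin m → ℝ) : ℝ :=
  ∏ i, rbfFun (y i) (μ i) (α i)

open scoped Classical in
/-- Decision function `H(y; (μl, αl), (μk, αk))`. -/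
noncomputable def decisionH {m : ℕ} (y μl αl μk αk : Fin m → ℝ) : ℝ :=
  if ∀ i, μl i < μk i then conjRBF y μk αk else 0

lemma logisticFun_pos (y μ α : ℝ) : 0 < logisticFun y μ α := by
  unfold logisticFun
  positivity

lemma logisticFun_le_one (y μ α : ℝ) : logisticFun y μ α ≤ 1 := by
  unfold logisticFun
  rw [div_le_one (by positivity)]
  nlinarith [Real.exp_pos (-α * (y - μ))]

lemma rbfFun_pos (y μ α : ℝ) : 0 < rbfFun y μ α := by
  unfold rbfFun
  positivity

lemma rbfFun_le_one (y μ α : ℝ) : rbfFun y μ α ≤ 1 := by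
  unfold rbfFun
  rw [div_le_one (by positivity)]
  nlinarith [Real.exp_pos (-α * (y - μ))]

lemma logisticFun_le_exp (y μ α : ℝ) : logisticFun y μ α ≤ Real.exp (α * (y - μ)) := by
  unfold logisticFun
  rw [div_le_iff₀ (by positivity)]
  have h : Real.exp (α * (y - μ)) * Real.exp (-α * (y - μ)) = 1 := by
    rw [← Real.exp_add]; ring_nf; exact Real.exp_zero
  nlinarith [Real.exp_pos (α * (y - μ))]

lemma rbfFun_le_exp (y μ α : ℝ) : rbfFun y μ α ≤ Real.exp (-α * (y - μ)) := by
  unfold rbfFun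
  rw [div_le_iff₀ (by positivity)]
  nlinarith [Real.exp_pos (-α * (y - μ)), sq_nonneg (Real.exp (-α * (y - μ)))]

lemma prod_le_single_factor {m : ℕ} (f : Fin m → ℝ) (h0 : ∀ j, 0 ≤ f j)
    (h1 : ∀ j, f j ≤ 1) (i : Fin m) : ∏ j, f j ≤ f i := by
  calc ∏ j, f j = f i * ∏ j ∈ Finset.univ.erase i, f j :=
        (Finset.mul_prod_erase _ _ (Finset.mem_univ i)).symm
    _ ≤ f i * 1 := by
        apply mul_le_mul_of_nonneg_left _ (h0 i)
        exact Finset.prod_le_one (fun j _ => h0 j) (fun j _ => h1 j)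
    _ = f i := mul_one _

theorem logistic_mul_rbf_exp_decay_of_exists_center_lt
    (m : ℕ) (hm : 0 < m) (y μl μk αl αk : Fin m → ℝ)
    (hαl : ∀ i, 0 < αl i) (hαk : ∀ i, 0 < αk i)
    (hyl : ∀ i, y i ≠ μl i) (hyk : ∀ i, y i ≠ μk i)
    (hcenter : ∃ i, μk i < μl i) :
    ∃ C c : ℝ, 0 < C ∧ 0 < c ∧ ∀ t : ℝ, 1 ≤ t →
      conjLog y μl (fun i => t * αl i) * conjRBF y μk (fun i => t * αk i)
        ≤ C * Real.exp (-c * t) := by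
  obtain ⟨i, hi⟩ := hcenter
  have hLog_le_one : ∀ t : ℝ, conjLog y μl (fun j => t * αl j) ≤ 1 := fun t =>
    Finset.prod_le_one (fun j _ => (logisticFun_pos _ _ _).le)
      (fun j _ => logisticFun_le_one _ _ _)
  have hRBF_le_one : ∀ t : ℝ, conjRBF y μk (fun j => t * αk j) ≤ 1 := fun t =>
    Finset.prod_le_one (fun j _ => (rbfFun_pos _ _ _).le)
      (fun j _ => rbfFun_le_one _ _ _)
  have hLog_nonneg : ∀ t : ℝ, 0 ≤ conjLog y μl (fun j => t * αl j) := fun t =>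
    Finset.prod_nonneg (fun j _ => (logisticFun_pos _ _ _).le)
  have hRBF_nonneg : ∀ t : ℝ, 0 ≤ conjRBF y μk (fun j => t * αk j) := fun t =>
    Finset.prod_nonneg (fun j _ => (rbfFun_pos _ _ _).le)
  rcases lt_or_gt_of_ne (hyl i) with hlt | hgt
  · -- y i < μl i : logistic factor decays
    refine ⟨1, αl i * (μl i - y i), one_pos, by nlinarith [hαl i], fun t ht => ?_⟩
    have h1 : conjLog y μl (fun j => t * αl j) ≤ logisticFun (y i) (μl i) (t * αl i) :=
      prod_le_single_factor _ (fun j => (logisticFun_pos _ _ _).le)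
        (fun j => logisticFun_le_one _ _ _) i
    have h2 : logisticFun (y i) (μl i) (t * αl i) ≤ Real.exp (-(αl i * (μl i - y i)) * t) := by
      have := logisticFun_le_exp (y i) (μl i) (t * αl i)
      calc logisticFun (y i) (μl i) (t * αl i) ≤ Real.exp (t * αl i * (y i - μl i)) := this
        _ = Real.exp (-(αl i * (μl i - y i)) * t) := by ring_nf
    calc conjLog y μl (fun j => t * αl j) * conjRBF y μk (fun j => t * αk j)
        ≤ Real.exp (-(αl i * (μl i - y i)) * t) * 1 := by
          apply mul_le_mul (h1.trans h2) (hRBF_le_one t) (hRBF_nonneg t) (Real.exp_pos _).le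
      _ = 1 * Real.exp (-(αl i * (μl i - y i)) * t) := by ring
  · -- y i > μl i > μk i : rbf factor decays
    have hik : μk i < y i := hi.trans hgt
    refine ⟨1, αk i * (y i - μk i), one_pos, by nlinarith [hαk i], fun t ht => ?_⟩
    have h1 : conjRBF y μk (fun j => t * αk j) ≤ rbfFun (y i) (μk i) (t * αk i) :=
      prod_le_single_factor _ (fun j => (rbfFun_pos _ _ _).le)
        (fun j => rbfFun_le_one _ _ _) i
    have h2 : rbfFun (y i) (μk i) (t * αk i) ≤ Real.exp (-(αk i * (y i - μk i)) * t) := by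
      have := rbfFun_le_exp (y i) (μk i) (t * αk i)
      calc rbfFun (y i) (μk i) (t * αk i) ≤ Real.exp (-(t * αk i) * (y i - μk i)) := this
        _ = Real.exp (-(αk i * (y i - μk i)) * t) := by ring_nf
    calc conjLog y μl (fun j => t * αl j) * conjRBF y μk (fun j => t * αk j)
        ≤ 1 * Real.exp (-(αk i * (y i - μk i)) * t) := by
          apply mul_le_mul (hLog_le_one t) (h1.trans h2) (hRBF_nonneg t) one_pos.le
      _ = 1 * Real.exp (-(αk i * (y i - μk i)) * t) := rfl
end

section
/- Let m, N_L, N_R be positive integers, let w ∈ ℝ^{m×(N_L+N_R)} be a fixed weight matrix, let μ_1, …, μ_{N_L+N_R} ∈ ℝ^m be centers, let α_1, …, α_{N_L+N_R} ∈ (0,∞)^m be fixed strictly positive base steepness vectors, fix l ∈ {1, …, N_L}, and let y ∈ ℝ^m satisfy y_i ≠ μ_{ji} for every i = 1, …, m and every j = 1, …, N_L+N_R. For each j ≤ N_L define μ*_{lj,i} := max(μ_{li}, μ_{ji}) with α*_{lj,i} := α_{li} if μ_{li} ≥ μ_{ji} and α*_{lj,i} := α_{ji} otherwise. Then the sum of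 products Σ_{i=1}^m Σ_{j=1}^{N_L} tα_{li} w_{ij} Λ(y; μ_l, tα_l) Λ(y; μ_j, tα_j) + Σ_{i=1}^m Σ_{k=N_L+1}^{N_L+N_R} tα_{li} w_{ik} Λ(y; μ_l, tα_l) P(y; μ_k, tα_k), minus the weighted sum of dictionary functions Σ_{i=1}^m Σ_{j=1}^{N_L} tα_{li} w_{ij} Λ(y; μ*_{lj}, tα*_{lj}) + Σ_{i=1}^m Σ_{k=N_L+1}^{N_L+N_R} tα_{li} w_{ik} H(y; (μ_l, tα_l), (μ_k, tα_k)), converges to 0 exponentially as t → ∞: there exist constants C, c > 0 such that the absolute value of this difference is at most C·exp(−c·t) for all t ≥ 1. -/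
open MeasureTheory ProbabilityTheory Real

/-- Exponentially small functions on `[1, ∞)`. -/
def ExpSmall (f : ℝ → ℝ) : Prop :=
  ∃ C c : ℝ, 0 < C ∧ 0 < c ∧ ∀ t : ℝ, 1 ≤ t → |f t| ≤ C * Real.exp (-c * t)

lemma ExpSmall.of_le {f g : ℝ → ℝ} (hg : ExpSmall g) (h : ∀ t, 1 ≤ t → |f t| ≤ |g t|) :
    ExpSmall f := by
  obtain ⟨C, c, hC, hc, hb⟩ := hg
  exact ⟨C, c, hC, hc, fun t ht => (h t ht).trans (hb t ht)⟩

lemma ExpSmall.of_eq {f g : ℝ → ℝ} (hg : ExpSmall g) (h : ∀ t, f t = g t) : ExpSmall f :=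
  hg.of_le (fun t _ => by rw [h])

lemma ExpSmall.abs {f : ℝ → ℝ} (hf : ExpSmall f) : ExpSmall (fun t => |f t|) :=
  hf.of_le (fun t _ => by rw [abs_abs])

lemma expSmall_zero : ExpSmall (fun _ => 0) :=
  ⟨1, 1, one_pos, one_pos, fun t _ => by simp [(Real.exp_pos _).le]⟩

lemma expSmall_of_exp_bound {f : ℝ → ℝ} {c : ℝ} (hc : 0 < c)
    (h : ∀ t, 1 ≤ t → |f t| ≤ Real.exp (-c * t)) : ExpSmall f :=
  ⟨1, c, one_pos, hc, fun t ht => by simpa using h t ht⟩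

lemma ExpSmall.add {f g : ℝ → ℝ} (hf : ExpSmall f) (hg : ExpSmall g) :
    ExpSmall (fun t => f t + g t) := by
  obtain ⟨C1, c1, hC1, hc1, h1⟩ := hf
  obtain ⟨C2, c2, hC2, hc2, h2⟩ := hg
  refine ⟨C1 + C2, min c1 c2, by positivity, lt_min hc1 hc2, fun t ht => ?_⟩
  have ht0 : (0:ℝ) ≤ t := le_trans zero_le_one ht
  have e1 : Real.exp (-c1 * t) ≤ Real.exp (-(min c1 c2) * t) := by
    apply Real.exp_le_exp.2
    nlinarith [mul_nonneg (sub_nonneg.2 (min_le_left c1 c2)) ht0]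
  have e2 : Real.exp (-c2 * t) ≤ Real.exp (-(min c1 c2) * t) := by
    apply Real.exp_le_exp.2
    nlinarith [mul_nonneg (sub_nonneg.2 (min_le_right c1 c2)) ht0]
  calc |f t + g t| ≤ |f t| + |g t| := abs_add_le _ _
    _ ≤ C1 * Real.exp (-c1 * t) + C2 * Real.exp (-c2 * t) := add_le_add (h1 t ht) (h2 t ht)
    _ ≤ (C1 + C2) * Real.exp (-(min c1 c2) * t) := by nlinarith [mul_le_mul_of_nonneg_left e1 hC1.le, mul_le_mul_of_nonneg_left e2 hC2.le]

lemma expSmall_sum {ι : Type*} (s : Finset ι) (f : ι → ℝ → ℝ)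
    (h : ∀ i ∈ s, ExpSmall (f i)) : ExpSmall (fun t => ∑ i ∈ s, f i t) := by
  classical
  induction s using Finset.induction with
  | empty => exact expSmall_zero.of_eq (fun t => by simp)
  | @insert x s hx ih =>
    have := (h x (Finset.mem_insert_self x s)).add
      (ih (fun i hi => h i (Finset.mem_insert_of_mem hi)))
    exact this.of_eq (fun t => by rw [Finset.sum_insert hx])

lemma ExpSmall.const_mul {f : ℝ → ℝ} (k : ℝ) (hf : ExpSmall f) :
    ExpSmall (fun t => k * f t) := by
  obtain ⟨C, c, hC, hc, hb⟩ := hf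
  refine ⟨(|k| + 1) * C, c, by positivity, hc, fun t ht => ?_⟩
  rw [abs_mul]
  nlinarith [mul_le_mul_of_nonneg_left (hb t ht) (abs_nonneg k),
    mul_pos hC (Real.exp_pos (-c * t)), abs_nonneg k]

lemma ExpSmall.t_mul {f : ℝ → ℝ} (hf : ExpSmall f) : ExpSmall (fun t => t * f t) := by
  obtain ⟨C, c, hC, hc, hb⟩ := hf
  refine ⟨(2 / c) * C, c / 2, by positivity, by positivity, fun t ht => ?_⟩
  have ht0 : (0:ℝ) ≤ t := le_trans zero_le_one ht
  have h2 : c / 2 * t ≤ Real.exp (c / 2 * t) := by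
    nlinarith [Real.add_one_le_exp (c / 2 * t)]
  have h1 : t ≤ 2 / c * Real.exp (c / 2 * t) := by
    have h3 := mul_le_mul_of_nonneg_left h2 (by positivity : (0:ℝ) ≤ 2 / c)
    have h4 : 2 / c * (c / 2 * t) = t := by field_simp
    linarith
  have hee : Real.exp (c / 2 * t) * Real.exp (-c * t) = Real.exp (-(c / 2) * t) := by
    rw [← Real.exp_add]; congr 1; ring
  rw [abs_mul, abs_of_nonneg ht0]
  calc t * |f t| ≤ (2 / c * Real.exp (c / 2 * t)) * (C * Real.exp (-c * t)) :=
        mul_le_mul h1 (hb t ht) (abs_nonneg _) (by positivity)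
    _ = 2 / c * C * Real.exp (-(c / 2) * t) := by
        rw [mul_mul_mul_comm, hee]

-- basic logistic / rbf bounds
lemma logistic_nonneg (y μ a : ℝ) : 0 ≤ logisticFun y μ a := by
  unfold logisticFun; positivity

lemma logistic_le_one (y μ a : ℝ) : logisticFun y μ a ≤ 1 := by
  unfold logisticFun
  rw [div_le_one (by positivity)]
  nlinarith [Real.exp_pos (-a * (y - μ))]

lemma one_sub_logistic_le (y μ a : ℝ) : 1 - logisticFun y μ a ≤ Real.exp (-a * (y - μ)) := by
  unfold logisticFun
  have hE := Real.exp_pos (-a * (y - μ))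
  set E := Real.exp (-a * (y - μ))
  have h : 1 - 1 / (1 + E) = E / (1 + E) := by field_simp; ring
  rw [h]
  exact div_le_self hE.le (by linarith)

lemma logistic_le_exp (y μ a : ℝ) : logisticFun y μ a ≤ Real.exp (a * (y - μ)) := by
  unfold logisticFun
  have hE := Real.exp_pos (-a * (y - μ))
  have h1 : Real.exp (a * (y - μ)) = 1 / Real.exp (-a * (y - μ)) := by
    rw [one_div, ← Real.exp_neg]; congr 1; ring
  rw [h1]
  apply one_div_le_one_div_of_le hE
  linarith

lemma rbf_nonneg (y μ a : ℝ) : 0 ≤ rbfFun y μ a := by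
  unfold rbfFun; positivity

lemma rbf_le_one (y μ a : ℝ) : rbfFun y μ a ≤ 1 := by
  unfold rbfFun
  have hE := Real.exp_pos (-a * (y - μ))
  rw [div_le_one (by positivity)]
  nlinarith

lemma rbf_le_exp_neg (y μ a : ℝ) : rbfFun y μ a ≤ Real.exp (-a * (y - μ)) := by
  unfold rbfFun
  have hE := Real.exp_pos (-a * (y - μ))
  apply div_le_self hE.le
  nlinarith

lemma rbf_le_exp_pos (y μ a : ℝ) : rbfFun y μ a ≤ Real.exp (a * (y - μ)) := by
  unfold rbfFun
  have hE := Real.exp_pos (-a * (y - μ))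
  have h1 : Real.exp (a * (y - μ)) = 1 / Real.exp (-a * (y - μ)) := by
    rw [one_div, ← Real.exp_neg]; congr 1; ring
  rw [h1, div_le_div_iff₀ (by positivity) hE]
  nlinarith

lemma abs_prod_sub_prod_le {ι : Type*} (s : Finset ι) (a b : ι → ℝ)
    (ha0 : ∀ i ∈ s, 0 ≤ a i) (ha1 : ∀ i ∈ s, a i ≤ 1)
    (hb0 : ∀ i ∈ s, 0 ≤ b i) (hb1 : ∀ i ∈ s, b i ≤ 1) :
    |(∏ i ∈ s, a i) - ∏ i ∈ s, b i| ≤ ∑ i ∈ s, |a i - b i| := by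
  classical
  induction s using Finset.induction with
  | empty => simp
  | @insert x s hx ih =>
    rw [Finset.prod_insert hx, Finset.prod_insert hx, Finset.sum_insert hx]
    have key : a x * ∏ i ∈ s, a i - b x * ∏ i ∈ s, b i
        = a x * ((∏ i ∈ s, a i) - ∏ i ∈ s, b i) + (a x - b x) * ∏ i ∈ s, b i := by ring
    rw [key]
    have hax0 := ha0 x (Finset.mem_insert_self x s)
    have hax1 := ha1 x (Finset.mem_insert_self x s)
    have hpb0 : (0:ℝ) ≤ ∏ i ∈ s, b i :=
      Finset.prod_nonneg (fun i hi => hb0 i (Finset.mem_insert_of_mem hi))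
    have hpb1 : (∏ i ∈ s, b i) ≤ 1 :=
      Finset.prod_le_one (fun i hi => hb0 i (Finset.mem_insert_of_mem hi))
        (fun i hi => hb1 i (Finset.mem_insert_of_mem hi))
    have ihs := ih (fun i hi => ha0 i (Finset.mem_insert_of_mem hi))
      (fun i hi => ha1 i (Finset.mem_insert_of_mem hi))
      (fun i hi => hb0 i (Finset.mem_insert_of_mem hi))
      (fun i hi => hb1 i (Finset.mem_insert_of_mem hi))
    calc |a x * ((∏ i ∈ s, a i) - ∏ i ∈ s, b i) + (a x - b x) * ∏ i ∈ s, b i|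
        ≤ |a x * ((∏ i ∈ s, a i) - ∏ i ∈ s, b i)| + |(a x - b x) * ∏ i ∈ s, b i| :=
          abs_add_le _ _
      _ = |a x| * |(∏ i ∈ s, a i) - ∏ i ∈ s, b i| + |a x - b x| * |∏ i ∈ s, b i| := by
          rw [abs_mul, abs_mul]
      _ ≤ 1 * (∑ i ∈ s, |a i - b i|) + |a x - b x| * 1 := by
          gcongr
          · rw [abs_of_nonneg hax0]; exact hax1
          · rw [abs_of_nonneg hpb0]; exact hpb1
      _ = |a x - b x| + ∑ i ∈ s, |a i - b i| := by ring

lemma prod_le_of_mem {ι : Type*} (s : Finset ι) (f : ι → ℝ)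
    (h0 : ∀ i ∈ s, 0 ≤ f i) (h1 : ∀ i ∈ s, f i ≤ 1) {i0 : ι} (hi0 : i0 ∈ s) :
    (∏ i ∈ s, f i) ≤ f i0 := by
  classical
  rw [← Finset.mul_prod_erase s f hi0]
  have h : (∏ i ∈ s.erase i0, f i) ≤ 1 :=
    Finset.prod_le_one (fun i hi => h0 i (Finset.mem_of_mem_erase hi))
      (fun i hi => h1 i (Finset.mem_of_mem_erase hi))
  exact mul_le_of_le_one_right (h0 i0 hi0) h

lemma pair_logistic_expSmall (y μ μ' α α' : ℝ) (hα : 0 < α) (hα' : 0 < α')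
    (hy : y ≠ μ) (hy' : y ≠ μ') :
    ExpSmall (fun t => logisticFun y μ (t * α) * logisticFun y μ' (t * α')
      - logisticFun y (max μ μ') (t * (if μ' ≤ μ then α else α'))) := by
  by_cases h : μ' ≤ μ
  · simp only [if_pos h, max_eq_left h]
    rcases lt_or_gt_of_ne hy' with hlt | hgt
    · -- y < μ' ≤ μ
      have hyμ : y < μ := lt_of_lt_of_le hlt h
      refine expSmall_of_exp_bound (c := α * (μ - y)) (by nlinarith) (fun t ht => ?_)
      have hA0 := logistic_nonneg y μ (t * α)
      have hB0 := logistic_nonneg y μ' (t * α')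
      have hB1 := logistic_le_one y μ' (t * α')
      have hAe := logistic_le_exp y μ (t * α)
      have hexp : Real.exp ((t * α) * (y - μ)) = Real.exp (-(α * (μ - y)) * t) := by
        congr 1; ring
      rw [hexp] at hAe
      rw [abs_of_nonpos (by nlinarith)]
      nlinarith [mul_nonneg hA0 hB0]
    · -- μ' < y
      refine expSmall_of_exp_bound (c := α' * (y - μ')) (by nlinarith) (fun t ht => ?_)
      have hA0 := logistic_nonneg y μ (t * α)
      have hA1 := logistic_le_one y μ (t * α)
      have hB0 := logistic_nonneg y μ' (t * α')
      have hB1 := logistic_le_one y μ' (t * α')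
      have hBe := one_sub_logistic_le y μ' (t * α')
      have hexp : Real.exp (-(t * α') * (y - μ')) = Real.exp (-(α' * (y - μ')) * t) := by
        congr 1; ring
      rw [hexp] at hBe
      rw [abs_of_nonpos (by nlinarith)]
      nlinarith
  · have h' : μ < μ' := not_le.mp h
    simp only [if_neg h, max_eq_right h'.le]
    rcases lt_or_gt_of_ne hy with hlt | hgt
    · -- y < μ < μ'
      have hyμ' : y < μ' := lt_trans hlt h'
      refine expSmall_of_exp_bound (c := α' * (μ' - y)) (by nlinarith) (fun t ht => ?_)
      have hA0 := logistic_nonneg y μ (t * α)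
      have hA1 := logistic_le_one y μ (t * α)
      have hB0 := logistic_nonneg y μ' (t * α')
      have hBe := logistic_le_exp y μ' (t * α')
      have hexp : Real.exp ((t * α') * (y - μ')) = Real.exp (-(α' * (μ' - y)) * t) := by
        congr 1; ring
      rw [hexp] at hBe
      rw [abs_of_nonpos (by nlinarith [mul_nonneg hA0 hB0])]
      nlinarith [mul_nonneg hA0 hB0]
    · -- μ < y
      refine expSmall_of_exp_bound (c := α * (y - μ)) (by nlinarith) (fun t ht => ?_)
      have hA0 := logistic_nonneg y μ (t * α)
      have hA1 := logistic_le_one y μ (t * α)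
      have hB0 := logistic_nonneg y μ' (t * α')
      have hB1 := logistic_le_one y μ' (t * α')
      have hAe := one_sub_logistic_le y μ (t * α)
      have hexp : Real.exp (-(t * α) * (y - μ)) = Real.exp (-(α * (y - μ)) * t) := by
        congr 1; ring
      rw [hexp] at hAe
      rw [abs_of_nonpos (by nlinarith)]
      nlinarith

lemma conj_pair_expSmall {m : ℕ} (y μl μj αl αj : Fin m → ℝ)
    (hαl : ∀ i, 0 < αl i) (hαj : ∀ i, 0 < αj i)
    (hyl : ∀ i, y i ≠ μl i) (hyj : ∀ i, y i ≠ μj i) :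
    ExpSmall (fun t => conjLog y μl (fun i => t * αl i) * conjLog y μj (fun i => t * αj i)
      - conjLog y (fun i => max (μl i) (μj i))
          (fun i => t * (if μj i ≤ μl i then αl i else αj i))) := by
  have hsum : ExpSmall (fun t => ∑ i : Fin m,
      |logisticFun (y i) (μl i) (t * αl i) * logisticFun (y i) (μj i) (t * αj i)
        - logisticFun (y i) (max (μl i) (μj i))
            (t * (if μj i ≤ μl i then αl i else αj i))|) :=
    expSmall_sum _ _ (fun i _ =>
      (pair_logistic_expSmall (y i) (μl i) (μj i) (αl i) (αj i)
        (hαl i) (hαj i) (hyl i) (hyj i)).abs)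
  refine hsum.of_le (fun t ht => le_trans ?_ (le_abs_self _))
  unfold conjLog
  rw [← Finset.prod_mul_distrib]
  exact abs_prod_sub_prod_le _ _ _
    (fun i _ => mul_nonneg (logistic_nonneg _ _ _) (logistic_nonneg _ _ _))
    (fun i _ => mul_le_one₀ (logistic_le_one _ _ _) (logistic_nonneg _ _ _)
      (logistic_le_one _ _ _))
    (fun i _ => logistic_nonneg _ _ _)
    (fun i _ => logistic_le_one _ _ _)

lemma conj_rbf_expSmall {m : ℕ} (y μl μk αl αk : Fin m → ℝ)
    (hαl : ∀ i, 0 < αl i) (hαk : ∀ i, 0 < αk i)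
    (hyl : ∀ i, y i ≠ μl i) (hyk : ∀ i, y i ≠ μk i) :
    ExpSmall (fun t => conjLog y μl (fun i => t * αl i) * conjRBF y μk (fun i => t * αk i)
      - decisionH y μl (fun i => t * αl i) μk (fun i => t * αk i)) := by
  by_cases h : ∀ i, μl i < μk i
  · simp only [decisionH, if_pos h]
    have hterm : ∀ i : Fin m, ExpSmall (fun t =>
        (1 - logisticFun (y i) (μl i) (t * αl i)) * rbfFun (y i) (μk i) (t * αk i)) := by
      intro i
      rcases lt_or_gt_of_ne (hyl i) with hlt | hgt
      · -- y i < μl i < μk i : use rbf bound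
        have hyk' : y i < μk i := lt_trans hlt (h i)
        refine expSmall_of_exp_bound (c := αk i * (μk i - y i))
          (by nlinarith [hαk i]) (fun t ht => ?_)
        have h1 := logistic_nonneg (y i) (μl i) (t * αl i)
        have h2 := logistic_le_one (y i) (μl i) (t * αl i)
        have h3 := rbf_nonneg (y i) (μk i) (t * αk i)
        have h4 := rbf_le_exp_pos (y i) (μk i) (t * αk i)
        have hexp : Real.exp ((t * αk i) * (y i - μk i))
            = Real.exp (-(αk i * (μk i - y i)) * t) := by congr 1; ring
        rw [hexp] at h4
        rw [abs_of_nonneg (by nlinarith)]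
        nlinarith
      · -- μl i < y i : use 1 - logistic bound
        refine expSmall_of_exp_bound (c := αl i * (y i - μl i))
          (by nlinarith [hαl i]) (fun t ht => ?_)
        have h1 := logistic_le_one (y i) (μl i) (t * αl i)
        have h2 := one_sub_logistic_le (y i) (μl i) (t * αl i)
        have h3 := rbf_nonneg (y i) (μk i) (t * αk i)
        have h4 := rbf_le_one (y i) (μk i) (t * αk i)
        have hexp : Real.exp (-(t * αl i) * (y i - μl i))
            = Real.exp (-(αl i * (y i - μl i)) * t) := by congr 1; ring
        rw [hexp] at h2
        rw [abs_of_nonneg (by nlinarith)]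
        nlinarith [Real.exp_pos (-(αl i * (y i - μl i)) * t)]
    have hsum := expSmall_sum Finset.univ _ (fun i _ => hterm i)
    refine hsum.of_le (fun t ht => ?_)
    have hsnn : (0:ℝ) ≤ ∑ i : Fin m,
        (1 - logisticFun (y i) (μl i) (t * αl i)) * rbfFun (y i) (μk i) (t * αk i) :=
      Finset.sum_nonneg (fun i _ => mul_nonneg
        (by linarith [logistic_le_one (y i) (μl i) (t * αl i)]) (rbf_nonneg _ _ _))
    rw [abs_of_nonneg hsnn]
    -- |Λ P - P| ≤ (Σ (1 - λ_i)) * P ≤ Σ (1-λ_i) ρ_i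
    have hP0 : (0:ℝ) ≤ conjRBF y μk (fun i => t * αk i) :=
      Finset.prod_nonneg (fun i _ => rbf_nonneg _ _ _)
    have hPρ : ∀ i : Fin m, conjRBF y μk (fun i => t * αk i) ≤ rbfFun (y i) (μk i) (t * αk i) :=
      fun i => prod_le_of_mem _ _ (fun i _ => rbf_nonneg _ _ _) (fun i _ => rbf_le_one _ _ _)
        (Finset.mem_univ i)
    have hΛ : |conjLog y μl (fun i => t * αl i) - 1|
        ≤ ∑ i : Fin m, (1 - logisticFun (y i) (μl i) (t * αl i)) := by
      have hmain := abs_prod_sub_prod_le (Finset.univ : Finset (Fin m))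
        (fun i => logisticFun (y i) (μl i) (t * αl i)) (fun _ => 1)
        (fun i _ => logistic_nonneg _ _ _) (fun i _ => logistic_le_one _ _ _)
        (fun i _ => zero_le_one) (fun i _ => le_refl 1)
      simp only [Finset.prod_const_one] at hmain
      have habs : ∀ i : Fin m, |logisticFun (y i) (μl i) (t * αl i) - 1|
          = 1 - logisticFun (y i) (μl i) (t * αl i) := fun i => by
        rw [abs_sub_comm, abs_of_nonneg (sub_nonneg.2 (logistic_le_one _ _ _))]
      rw [Finset.sum_congr rfl (fun i _ => habs i)] at hmain
      exact hmain
    calc |conjLog y μl (fun i => t * αl i) * conjRBF y μk (fun i => t * αk i)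
          - conjRBF y μk (fun i => t * αk i)|
        = |conjLog y μl (fun i => t * αl i) - 1| * conjRBF y μk (fun i => t * αk i) := by
          rw [show conjLog y μl (fun i => t * αl i) * conjRBF y μk (fun i => t * αk i)
              - conjRBF y μk (fun i => t * αk i)
              = (conjLog y μl (fun i => t * αl i) - 1) * conjRBF y μk (fun i => t * αk i)
            from by ring, abs_mul, abs_of_nonneg hP0]
      _ ≤ (∑ i : Fin m, (1 - logisticFun (y i) (μl i) (t * αl i)))
            * conjRBF y μk (fun i => t * αk i) := by gcongr
      _ = ∑ i : Fin m, (1 - logisticFun (y i) (μl i) (t * αl i))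
            * conjRBF y μk (fun i => t * αk i) := Finset.sum_mul _ _ _
      _ ≤ ∑ i : Fin m, (1 - logisticFun (y i) (μl i) (t * αl i))
            * rbfFun (y i) (μk i) (t * αk i) := by
          apply Finset.sum_le_sum
          intro i _
          exact mul_le_mul_of_nonneg_left (hPρ i)
            (by linarith [logistic_le_one (y i) (μl i) (t * αl i)])
  · simp only [decisionH, if_neg h]
    push_neg at h
    obtain ⟨i0, hi0⟩ := h
    have hΛ0 : ∀ t, (0:ℝ) ≤ conjLog y μl (fun i => t * αl i) :=
      fun t => Finset.prod_nonneg (fun i _ => logistic_nonneg _ _ _)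
    have hP0 : ∀ t, (0:ℝ) ≤ conjRBF y μk (fun i => t * αk i) :=
      fun t => Finset.prod_nonneg (fun i _ => rbf_nonneg _ _ _)
    have hLam : ∀ t, conjLog y μl (fun i => t * αl i) ≤ logisticFun (y i0) (μl i0) (t * αl i0) :=
      fun t => prod_le_of_mem _ _ (fun i _ => logistic_nonneg _ _ _)
        (fun i _ => logistic_le_one _ _ _) (Finset.mem_univ i0)
    have hPρ : ∀ t, conjRBF y μk (fun i => t * αk i) ≤ rbfFun (y i0) (μk i0) (t * αk i0) :=
      fun t => prod_le_of_mem _ _ (fun i _ => rbf_nonneg _ _ _)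
        (fun i _ => rbf_le_one _ _ _) (Finset.mem_univ i0)
    rcases lt_or_gt_of_ne (hyk i0) with hlt | hgt
    · -- y i0 < μk i0 ≤ μl i0 : Λ small
      have hyl' : y i0 < μl i0 := lt_of_lt_of_le hlt hi0
      refine expSmall_of_exp_bound (c := αl i0 * (μl i0 - y i0))
        (by nlinarith [hαl i0]) (fun t ht => ?_)
      have h1 := logistic_le_exp (y i0) (μl i0) (t * αl i0)
      have hexp : Real.exp ((t * αl i0) * (y i0 - μl i0))
          = Real.exp (-(αl i0 * (μl i0 - y i0)) * t) := by congr 1; ring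
      rw [hexp] at h1
      have h2 : conjRBF y μk (fun i => t * αk i) ≤ 1 :=
        Finset.prod_le_one (fun i _ => rbf_nonneg _ _ _) (fun i _ => rbf_le_one _ _ _)
      rw [sub_zero, abs_of_nonneg (mul_nonneg (hΛ0 t) (hP0 t))]
      nlinarith [hLam t, hΛ0 t, hP0 t, logistic_nonneg (y i0) (μl i0) (t * αl i0)]
    · -- μk i0 < y i0 : P small
      refine expSmall_of_exp_bound (c := αk i0 * (y i0 - μk i0))
        (by nlinarith [hαk i0]) (fun t ht => ?_)
      have h1 := rbf_le_exp_neg (y i0) (μk i0) (t * αk i0)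
      have hexp : Real.exp (-(t * αk i0) * (y i0 - μk i0))
          = Real.exp (-(αk i0 * (y i0 - μk i0)) * t) := by congr 1; ring
      rw [hexp] at h1
      have h2 : conjLog y μl (fun i => t * αl i) ≤ 1 :=
        Finset.prod_le_one (fun i _ => logistic_nonneg _ _ _) (fun i _ => logistic_le_one _ _ _)
      rw [sub_zero, abs_of_nonneg (mul_nonneg (hΛ0 t) (hP0 t))]
      nlinarith [hPρ t, hΛ0 t, hP0 t, rbf_nonneg (y i0) (μk i0) (t * αk i0)]

theorem bilinear_logistic_sum_exp_approx
    (m NL NR : ℕ) (hm : 0 < m) (hNL : 0 < NL) (hNR : 0 < NR)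
    (wL : Fin m → Fin NL → ℝ) (wR : Fin m → Fin NR → ℝ)
    (μL : Fin NL → Fin m → ℝ) (μR : Fin NR → Fin m → ℝ)
    (αL : Fin NL → Fin m → ℝ) (αR : Fin NR → Fin m → ℝ)
    (hαL : ∀ j i, 0 < αL j i) (hαR : ∀ k i, 0 < αR k i)
    (l : Fin NL) (y : Fin m → ℝ)
    (hyL : ∀ i j, y i ≠ μL j i) (hyR : ∀ i k, y i ≠ μR k i) :
    ∃ C c : ℝ, 0 < C ∧ 0 < c ∧ ∀ t : ℝ, 1 ≤ t →
      |((∑ i, ∑ j, t * αL l i * wL i j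
            * (conjLog y (μL l) (fun i' => t * αL l i')
                * conjLog y (μL j) (fun i' => t * αL j i')))
          + ∑ i, ∑ k, t * αL l i * wR i k
            * (conjLog y (μL l) (fun i' => t * αL l i')
                * conjRBF y (μR k) (fun i' => t * αR k i')))
        - ((∑ i, ∑ j, t * αL l i * wL i j
              * conjLog y (fun i' => max (μL l i') (μL j i'))
                  (fun i' => t * (if μL j i' ≤ μL l i' then αL l i' else αL j i')))
          + ∑ i, ∑ k, t * αL l i * wR i k
              * decisionH y (μL l) (fun i' => t * αL l i') (μR k) (fun i' => t * αR k i'))|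
      ≤ C * Real.exp (-c * t) := by
  suffices hmain : ExpSmall (fun t =>
      ((∑ i, ∑ j, t * αL l i * wL i j
            * (conjLog y (μL l) (fun i' => t * αL l i')
                * conjLog y (μL j) (fun i' => t * αL j i')))
          + ∑ i, ∑ k, t * αL l i * wR i k
            * (conjLog y (μL l) (fun i' => t * αL l i')
                * conjRBF y (μR k) (fun i' => t * αR k i')))
        - ((∑ i, ∑ j, t * αL l i * wL i j
              * conjLog y (fun i' => max (μL l i') (μL j i'))
                  (fun i' => t * (if μL j i' ≤ μL l i' then αL l i' else αL j i')))
          + ∑ i, ∑ k, t * αL l i * wR i k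
              * decisionH y (μL l) (fun i' => t * αL l i') (μR k) (fun i' => t * αR k i'))) by
    obtain ⟨C, c, hC, hc, hb⟩ := hmain
    exact ⟨C, c, hC, hc, fun t ht => hb t ht⟩
  have hrw : ∀ t : ℝ,
      ((∑ i, ∑ j, t * αL l i * wL i j
            * (conjLog y (μL l) (fun i' => t * αL l i')
                * conjLog y (μL j) (fun i' => t * αL j i')))
          + ∑ i, ∑ k, t * αL l i * wR i k
            * (conjLog y (μL l) (fun i' => t * αL l i')
                * conjRBF y (μR k) (fun i' => t * αR k i')))
        - ((∑ i, ∑ j, t * αL l i * wL i j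
              * conjLog y (fun i' => max (μL l i') (μL j i'))
                  (fun i' => t * (if μL j i' ≤ μL l i' then αL l i' else αL j i')))
          + ∑ i, ∑ k, t * αL l i * wR i k
              * decisionH y (μL l) (fun i' => t * αL l i') (μR k) (fun i' => t * αR k i'))
      = (∑ i, ∑ j, t * αL l i * wL i j *
          ((conjLog y (μL l) (fun i' => t * αL l i')
              * conjLog y (μL j) (fun i' => t * αL j i'))
            - conjLog y (fun i' => max (μL l i') (μL j i'))
                (fun i' => t * (if μL j i' ≤ μL l i' then αL l i' else αL j i'))))
        + ∑ i, ∑ k, t * αL l i * wR i k *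
          ((conjLog y (μL l) (fun i' => t * αL l i')
              * conjRBF y (μR k) (fun i' => t * αR k i'))
            - decisionH y (μL l) (fun i' => t * αL l i') (μR k) (fun i' => t * αR k i')) := by
    intro t
    rw [show ∀ A B A' B' : ℝ, (A + B) - (A' + B') = (A - A') + (B - B') from
      fun _ _ _ _ => by ring]
    simp only [← Finset.sum_sub_distrib, ← mul_sub]
  refine ExpSmall.of_eq (ExpSmall.add ?_ ?_) hrw
  · exact expSmall_sum _ _ (fun i _ => expSmall_sum _ _ (fun j _ =>
      ExpSmall.of_eq
        (((conj_pair_expSmall y (μL l) (μL j) (αL l) (αL j) (hαL l) (hαL j)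
            (fun i' => hyL i' l) (fun i' => hyL i' j)).const_mul
          (αL l i * wL i j)).t_mul)
        (fun t => by ring)))
  · exact expSmall_sum _ _ (fun i _ => expSmall_sum _ _ (fun k _ =>
      ExpSmall.of_eq
        (((conj_rbf_expSmall y (μL l) (μR k) (αL l) (αR k) (hαL l) (hαR k)
            (fun i' => hyL i' l) (fun i' => hyR i' k)).const_mul
          (αL l i * wR i k)).t_mul)
        (fun t => by ring)))
end
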